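/- Let w ≥ 1 and let v₁, v₂, u₁, u₂ be bit-vectors of width w. The long-multiplication partial products of (v₂ ++ 0^w ++ v₂) with (0^w ++ v₁ ++ v₁) coincide, as a multiset of shifted terms, with those of (v₁ ++ 0^w ++ v₁) with (0^w ++ v₂ ++ v₂); in particular, the two products are equal: [(v₂ ++ 0^w ++ v₂) * (0^w ++ v₁ ++ v₁)] = [(v₁ ++ 0^w ++ v₁) * (0^w ++ v₂ ++ v₂)], where [·*·] denotes the zero-extended product at width 6w. -/

import Mathlib

lemma lor_helper {w b : ℕ} (hb : b < 2 ^ w) (a : ℕ) : a * 2 ^ w ||| b = a * 2 ^ w + b := by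
  rw [Nat.mul_comm a, ← Nat.two_pow_add_eq_or_of_lt hb, Nat.mul_comm]

/-- Example 3 of the paper: the operand pairs
`(v₂ ++ 0^w ++ v₂, 0^w ++ v₁ ++ v₁)` and `(v₁ ++ 0^w ++ v₁, 0^w ++ v₂ ++ v₂)`
yield identical shifted partial products; in particular their
zero-extended products at width `6w` are equal. -/
theorem ambiguous_partial_products (w : ℕ) (hw : 1 ≤ w) (v₁ v₂ u₁ u₂ : BitVec w) :
    BitVec.zeroExtend (6 * w) (v₂ ++ (0#w) ++ v₂) *
        BitVec.zeroExtend (6 * w) ((0#w) ++ v₁ ++ v₁) =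
      BitVec.zeroExtend (6 * w) (v₁ ++ (0#w) ++ v₁) *
        BitVec.zeroExtend (6 * w) ((0#w) ++ v₂ ++ v₂) := by
  apply BitVec.eq_of_toNat_eq
  have h3 : w + w + w ≤ 6 * w := by omega
  simp only [BitVec.toNat_mul, BitVec.toNat_setWidth, BitVec.toNat_append,
    BitVec.toNat_ofNat, Nat.zero_mod, Nat.shiftLeft_eq, Nat.zero_mul, Nat.zero_or, Nat.or_zero,
    Nat.mod_eq_of_lt (Nat.lt_of_lt_of_le (BitVec.isLt _) (Nat.pow_le_pow_right (by norm_num) h3))]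
  rw [lor_helper v₂.isLt, lor_helper v₁.isLt, lor_helper v₂.isLt, lor_helper v₁.isLt,
    ← Nat.mul_mod, ← Nat.mul_mod]
  ring_nf
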